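/- If for every real σ with 1/2 < σ < 1 and every real t one has ∫_{-∞}^∞ e^{itx} V_σ(x) dx ≠ 0, then ζ(s) ≠ 0 for every complex s with 1/2 < Re(s) < 1 (so that, combined with the functional equation, the Riemann hypothesis holds). -/

import Mathlib

open Complex MeasureTheory


noncomputable def Ffun : ℝ → ℂ := fun u => (((1 + Real.exp u)⁻¹ : ℝ) : ℂ)

lemma hasSum_F (t : ℝ) (ht : t ∈ Set.Ioi (0:ℝ)) :
    HasSum (fun i : ℕ => ((-1:ℂ)^i) * (Real.exp (-(i+1 : ℝ) * t) : ℝ)) (Ffun t) := by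
  have ht' : (0:ℝ) < t := ht
  have hr : ‖-Real.exp (-t)‖ < 1 := by
    rw [norm_neg, Real.norm_eq_abs, abs_of_pos (Real.exp_pos _)]
    exact Real.exp_lt_one_iff.mpr (by linarith)
  have h0 := (hasSum_geometric_of_norm_lt_one hr).mul_left (Real.exp (-t))
  have hv : Real.exp (-t) * (1 - -Real.exp (-t))⁻¹ = (1 + Real.exp t)⁻¹ := by
    rw [sub_neg_eq_add, Real.exp_neg]
    have h1 : (0:ℝ) < Real.exp t := Real.exp_pos t
    field_simp
    ring
  rw [hv] at h0
  have h1 : HasSum (fun i : ℕ => (-1:ℝ)^i * Real.exp (-(i+1 : ℝ) * t)) ((1 + Real.exp t)⁻¹) := by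
    refine h0.congr_fun fun i => ?_
    have he : (-(i+1:ℝ)) * t = ((i+1:ℕ):ℝ) * (-t) := by push_cast; ring
    rw [he, Real.exp_nat_mul, pow_succ, neg_pow]
    ring
  have := (Complex.hasSum_ofReal (f := fun i : ℕ => (-1:ℝ)^i * Real.exp (-(i+1:ℝ) * t))).mpr h1
  refine this.congr_fun fun i => ?_
  push_cast
  ring




lemma mellin_F_eq {s : ℂ} (hs : 1 < s.re) :
    mellin Ffun s = Complex.Gamma s * ((1 - 2^((1:ℂ)-s)) * riemannZeta s) := by
  have hs0 : 0 < s.re := by linarith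
  -- Mellin = Dirichlet series
  have h0 : HasSum (fun i : ℕ => Complex.Gamma s * ((-1:ℂ)^i) / (((i:ℝ)+1 : ℝ) : ℂ) ^ s)
      (mellin Ffun s) := by
    refine hasSum_mellin (fun i => Or.inr (by positivity)) hs0
      (fun t ht => (hasSum_F t ht).congr_fun fun i => by norm_num) ?_
    have h1 : Summable (fun n : ℕ => 1 / ((n:ℝ) + 1) ^ s.re) := by
      have := Real.summable_one_div_nat_rpow.mpr hs
      have h2 := (summable_nat_add_iff 1).mpr this
      refine h2.congr fun n => ?_
      push_cast
      ring_nf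
    refine h1.congr fun i => ?_
    simp [norm_pow]
  -- series for (1 - 2^(1-s)) ζ s
  have h1 : HasSum (fun n : ℕ => 1 / ((n:ℂ)+1) ^ s) (riemannZeta s) := by
    have hsummable : Summable (fun n : ℕ => 1 / ((n:ℂ)+1) ^ s) := by
      have := (summable_nat_add_iff 1).mpr (Complex.summable_one_div_nat_cpow.mpr hs)
      refine this.congr fun n => by push_cast; ring_nf
    exact hsummable.hasSum_iff.mpr (zeta_eq_tsum_one_div_nat_add_one_cpow hs).symm
  have h2 : HasSum (fun k : ℕ => (2:ℂ) / ((2*(k:ℂ)+1)+1) ^ s) (2 * ((2:ℂ)^(-s) * riemannZeta s)) := by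
    refine ((h1.mul_left ((2:ℂ)^(-s))).mul_left 2).congr_fun fun k => ?_
    rw [show ((2*(k:ℂ)+1)+1) = (((2:ℝ):ℂ)) * ((((k:ℝ)+1 : ℝ)):ℂ) by push_cast; ring,
      mul_cpow_ofReal_nonneg (by norm_num) (by positivity), cpow_neg]
    push_cast
    have hne : ((2:ℂ)^s) ≠ 0 := by
      simp [cpow_eq_zero_iff]
    field_simp
  have h3 : HasSum (fun n : ℕ => if n % 2 = 1 then (2:ℂ) / ((n:ℂ)+1) ^ s else 0)
      (2 * ((2:ℂ)^(-s) * riemannZeta s)) := by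
    have hinj : Function.Injective (fun k : ℕ => 2*k+1) := by
      intro a b hab; simp only at hab; omega
    rw [← hinj.hasSum_iff (f := fun n : ℕ => if n % 2 = 1 then (2:ℂ) / ((n:ℂ)+1) ^ s else 0) ?_]
    · refine h2.congr_fun fun k => ?_
      simp only [Function.comp]
      rw [if_pos (by omega)]
      push_cast
      ring_nf
    · intro n hn
      have hmod : n % 2 ≠ 1 := by
        intro hmod
        exact hn ⟨n / 2, show 2 * (n/2) + 1 = n by omega⟩
      rw [if_neg hmod]
  have h4 : HasSum (fun n : ℕ => ((-1:ℂ)^n) / ((n:ℂ)+1) ^ s)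
      ((1 - 2^((1:ℂ)-s)) * riemannZeta s) := by
    have hval : riemannZeta s - 2 * ((2:ℂ)^(-s) * riemannZeta s)
        = (1 - 2^((1:ℂ)-s)) * riemannZeta s := by
      have : (2:ℂ)^((1:ℂ)-s) = 2 * 2^(-s) := by
        rw [sub_eq_add_neg, cpow_add _ _ two_ne_zero, cpow_one]
      rw [this]; ring
    rw [← hval]
    refine (h1.sub h3).congr_fun fun n => ?_
    rcases Nat.even_or_odd n with he | ho
    · rw [if_neg (by have := Nat.even_iff.mp he; omega), Even.neg_one_pow he, sub_zero]
    · rw [if_pos (Nat.odd_iff.mp ho), Odd.neg_one_pow ho]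
      ring
  refine HasSum.unique h0 ?_
  refine (h4.mul_left (Complex.Gamma s)).congr_fun fun n => ?_
  push_cast
  ring



lemma continuous_F : Continuous Ffun :=
  Complex.continuous_ofReal.comp <|
    (continuous_const.add Real.continuous_exp).inv₀ fun x => (add_pos one_pos (Real.exp_pos x)).ne'

lemma diffAt_mellin_F {s : ℂ} (hs : 0 < s.re) : DifferentiableAt ℂ (mellin Ffun) s := by
  refine mellin_differentiableAt_of_isBigO_rpow_exp one_pos
    (continuous_F.continuousOn.locallyIntegrableOn measurableSet_Ioi) ?_ (b := 0) ?_ hs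
  · refine Asymptotics.IsBigO.of_bound 1 ?_
    filter_upwards with t
    have h1 : (0:ℝ) < Real.exp t := Real.exp_pos t
    simp only [Ffun, Complex.norm_real, Real.norm_eq_abs, one_mul, neg_one_mul]
    rw [abs_of_pos (by positivity), abs_of_pos (Real.exp_pos _), Real.exp_neg]
    exact inv_anti₀ h1 (by linarith)
  · refine Asymptotics.IsBigO.of_bound 1 ?_
    filter_upwards [self_mem_nhdsWithin] with t (ht : 0 < t)
    have h1 : (0:ℝ) < Real.exp t := Real.exp_pos t
    simp only [Ffun, Complex.norm_real, Real.norm_eq_abs, one_mul]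
    rw [neg_zero, Real.rpow_zero, abs_of_pos (by positivity : (0:ℝ) < (1+Real.exp t)⁻¹)]
    norm_num
    rw [inv_le_one_iff₀]
    right; linarith


lemma preconnected_U : IsPreconnected ({s : ℂ | 0 < s.re} \ {1}) := by
  set C : Set ℂ := {s : ℂ | 0 < s.re ∧ s.re < 1} with hCdef
  set A : Set ℂ := {s : ℂ | 0 < s.re ∧ 0 < s.im} with hAdef
  set B : Set ℂ := {s : ℂ | 0 < s.re ∧ s.im < 0} with hBdef
  set D : Set ℂ := {s : ℂ | 1 < s.re} with hDdef
  have hC : IsPreconnected C :=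
    ((convex_halfSpace_re_gt 0).inter (convex_halfSpace_re_lt 1)).isPreconnected
  have hA : IsPreconnected A :=
    ((convex_halfSpace_re_gt 0).inter (convex_halfSpace_im_gt 0)).isPreconnected
  have hB : IsPreconnected B :=
    ((convex_halfSpace_re_gt 0).inter (convex_halfSpace_im_lt 0)).isPreconnected
  have hD : IsPreconnected D := (convex_halfSpace_re_gt 1).isPreconnected
  have h1 : IsPreconnected (C ∪ A) := by
    refine IsPreconnected.union ((1:ℝ)/2 + Complex.I) ?_ ?_ hC hA <;>
      constructor <;> norm_num
  have h2 : IsPreconnected ((C ∪ A) ∪ D) := by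
    refine IsPreconnected.union ((2:ℝ) + Complex.I) (Or.inr ?_) ?_ h1 hD
    · constructor <;> norm_num
    · show (1:ℝ) < ((2:ℝ) + Complex.I).re; norm_num
  have h3 : IsPreconnected (((C ∪ A) ∪ D) ∪ B) := by
    refine IsPreconnected.union ((2:ℝ) - Complex.I) (Or.inr ?_) ?_ h2 hB
    · show (1:ℝ) < ((2:ℝ) - Complex.I).re; norm_num
    · constructor <;> norm_num
  have hset : {s : ℂ | 0 < s.re} \ {1} = ((C ∪ A) ∪ D) ∪ B := by
    ext z
    simp only [Set.mem_diff, Set.mem_setOf_eq, Set.mem_singleton_iff, Set.mem_union,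
      hCdef, hAdef, hBdef, hDdef, Complex.ext_iff, Complex.one_re, Complex.one_im]
    constructor
    · rintro ⟨h0, hne⟩
      rcases lt_trichotomy z.re 1 with hre | hre | hre
      · exact Or.inl (Or.inl (Or.inl ⟨h0, hre⟩))
      · rcases lt_trichotomy z.im 0 with him | him | him
        · exact Or.inr ⟨h0, him⟩
        · exact absurd ⟨hre, him⟩ hne
        · exact Or.inl (Or.inl (Or.inr ⟨h0, him⟩))
      · exact Or.inl (Or.inr hre)
    · rintro (((⟨h0, hre⟩ | ⟨h0, him⟩) | hre) | ⟨h0, him⟩)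
      · exact ⟨h0, fun hz => by linarith [hz.1]⟩
      · exact ⟨h0, fun hz => by linarith [hz.2]⟩
      · exact ⟨by linarith, fun hz => by linarith [hz.1]⟩
      · exact ⟨h0, fun hz => by linarith [hz.2]⟩
  rw [hset]
  exact h3



lemma mellin_F_eq' {s : ℂ} (hs : 0 < s.re) (hs1 : s ≠ 1) :
    mellin Ffun s = Complex.Gamma s * ((1 - 2^((1:ℂ)-s)) * riemannZeta s) := by
  set U : Set ℂ := {s : ℂ | 0 < s.re} \ {1} with hUdef
  have hUopen : IsOpen U := (isOpen_lt continuous_const Complex.continuous_re).sdiff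
    isClosed_singleton
  have hf : AnalyticOnNhd ℂ (mellin Ffun) U :=
    DifferentiableOn.analyticOnNhd
      (fun z hz => (diffAt_mellin_F hz.1).differentiableWithinAt) hUopen
  have hg : AnalyticOnNhd ℂ (fun z => Complex.Gamma z * ((1 - 2^((1:ℂ)-z)) * riemannZeta z)) U := by
    refine DifferentiableOn.analyticOnNhd (fun z hz => DifferentiableAt.differentiableWithinAt ?_)
      hUopen
    have hz0 : 0 < z.re := hz.1
    refine (Complex.differentiableAt_Gamma z fun m => ?_).mul
      (((differentiableAt_const _).sub ?_).mul (differentiableAt_riemannZeta ?_))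
    · intro hzm
      rw [hzm] at hz0
      simp at hz0
      exact (Nat.cast_nonneg m).not_gt hz0
    · exact ((differentiableAt_const _).sub differentiableAt_id).const_cpow
        (Or.inl two_ne_zero)
    · exact fun h1 => hz.2 (by simpa using h1)
  have h2U : (2:ℂ) ∈ U := by
    constructor
    · show (0:ℝ) < (2:ℂ).re; norm_num
    · intro h; simp at h
  have hev : mellin Ffun =ᶠ[nhds (2:ℂ)]
      fun z => Complex.Gamma z * ((1 - 2^((1:ℂ)-z)) * riemannZeta z) := by
    refine Filter.eventuallyEq_of_mem
      ((isOpen_lt continuous_const Complex.continuous_re).mem_nhds ?_) fun z hz => mellin_F_eq hz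
    show (1:ℝ) < (2:ℂ).re; norm_num
  exact hf.eqOn_of_preconnected_of_eventuallyEq hg preconnected_U h2U hev ⟨hs, hs1⟩



lemma integral_eq_mellin (s : ℂ) :
    ∫ x : ℝ, Complex.exp (Complex.I * s.im * x)
        * ((Real.exp (s.re * x) / (1 + Real.exp (Real.exp x)) : ℝ) : ℂ)
      = mellin Ffun s := by
  have key := integral_image_eq_integral_abs_deriv_smul (s := Set.univ) (f := Real.exp)
    (f' := Real.exp) MeasurableSet.univ
    (fun x _ => (Real.hasDerivAt_exp x).hasDerivWithinAt)
    (Real.exp_injective.injOn) (fun u => (u:ℂ) ^ (s - 1) • Ffun u)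
  rw [Set.image_univ, Real.range_exp, Measure.restrict_univ] at key
  rw [mellin, key]
  refine integral_congr_ae (Filter.Eventually.of_forall fun x => ?_)
  have hx : Complex.log (Complex.exp (x : ℂ)) = (x : ℂ) :=
    Complex.log_exp (by simpa using Real.pi_pos) (by simp [Real.pi_pos.le])
  have hcpow : ((Real.exp x : ℝ) : ℂ) ^ (s - 1) = Complex.exp ((x : ℂ) * (s - 1)) := by
    rw [Complex.ofReal_exp, Complex.cpow_def_of_ne_zero (Complex.exp_ne_zero _), hx]
  simp only []
  rw [abs_of_pos (Real.exp_pos x), hcpow]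
  simp only [Ffun, smul_eq_mul, Complex.real_smul]
  have hexp : Complex.exp (Complex.I * (s.im:ℂ) * (x:ℂ)) * Complex.exp ((s.re * x : ℝ) : ℂ)
      = Complex.exp ((x:ℂ)) * Complex.exp ((x:ℂ) * (s - 1)) := by
    rw [← Complex.exp_add, ← Complex.exp_add]
    congr 1
    push_cast
    linear_combination (x:ℂ) * Complex.re_add_im s
  rw [Complex.ofReal_div, Complex.ofReal_exp, div_eq_mul_inv, ← Complex.ofReal_inv,
    ← mul_assoc, ← mul_assoc, Complex.ofReal_exp, hexp]


/-- If the Fourier transform of `V_σ` never vanishes for `1/2 < σ < 1`, then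
`ζ` has no zeros in the strip `1/2 < Re s < 1`. -/
theorem no_zeta_zero_of_fourier_V_ne_zero
    (h : ∀ σ t : ℝ, 1 / 2 < σ → σ < 1 →
      ∫ x : ℝ, Complex.exp (Complex.I * t * x)
          * ((Real.exp (σ * x) / (1 + Real.exp (Real.exp x)) : ℝ) : ℂ) ≠ 0) :
    ∀ s : ℂ, 1 / 2 < s.re → s.re < 1 → riemannZeta s ≠ 0 := by
  intro s hs1 hs2 hzero
  have hne := h s.re s.im hs1 hs2
  apply hne
  rw [integral_eq_mellin s, mellin_F_eq' (by linarith) (fun hs => by simp [hs] at hs2),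
    hzero]
  ring
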